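/- For n > 2 and k = n−1, the quantity λ = −n(n−1) + n²H² − ‖A‖² is strictly negative for the hypersurface H^{n−1}(−√(1+r²)) × S¹(r) ⊂ ℍ^{n+1}, where H = (n·r² + 1)/(n·r·√(1+r²)) and ‖A‖² = ((n−1)·r⁴ + (1+r²)²)/(r²(1+r²)). -/
import Mathlib


theorem stmt_5 (n : ℕ) (hn : 2 < n) (r : ℝ) (hr : 0 < r) (H A2 : ℝ)
    (hH : H = ((n : ℝ) * r ^ 2 + 1) / (n * r * Real.sqrt (1 + r ^ 2)))
    (hA : A2 = (((n : ℝ) - 1) * r ^ 4 + (1 + r ^ 2) ^ 2) / (r ^ 2 * (1 + r ^ 2))) :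
    -(n : ℝ) * ((n : ℝ) - 1) + (n : ℝ) ^ 2 * H ^ 2 - A2 < 0 := by
  have hn' : (2 : ℝ) < (n : ℝ) := by exact_mod_cast hn
  have h1 : (0 : ℝ) < 1 + r ^ 2 := by positivity
  have hs : 0 < Real.sqrt (1 + r ^ 2) := Real.sqrt_pos.mpr h1
  have hsq : Real.sqrt (1 + r ^ 2) ^ 2 = 1 + r ^ 2 := Real.sq_sqrt h1.le
  have hn0 : (0 : ℝ) < (n : ℝ) := by linarith
  subst hH hA
  have key : -(n : ℝ) * ((n : ℝ) - 1) +
      (n : ℝ) ^ 2 * (((n : ℝ) * r ^ 2 + 1) / ((n : ℝ) * r * Real.sqrt (1 + r ^ 2))) ^ 2 -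
      (((n : ℝ) - 1) * r ^ 4 + (1 + r ^ 2) ^ 2) / (r ^ 2 * (1 + r ^ 2)) =
      -(((n : ℝ) - 1) * ((n : ℝ) - 2) * r ^ 2) / (r ^ 2 * (1 + r ^ 2)) := by
    rw [div_pow, mul_pow, hsq]
    field_simp
    ring
  rw [key]
  apply div_neg_of_neg_of_pos
  · have h2 : 0 < ((n : ℝ) - 1) * ((n : ℝ) - 2) * r ^ 2 :=
      mul_pos (mul_pos (by linarith) (by linarith)) (by positivity)
    linarith
  · positivity
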